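/- arXiv:2106.07491 — 2 statements merged into one kernel-verified Lean document; each statement's English description precedes it below -/
import Mathlib

section
/- Under the hypotheses of the previous interconnection inequality and for any positive constants γ₁, γ₂, γ₃, γ₄, there exists a constant β̂ such that for all T ≥ 0: c₁‖y₁‖²_{2,T} + c₂‖y₂‖²_{2,T} ≤ c₃‖r₁‖²_{2,T} + c₄‖r₂‖²_{2,T} + β̂, where c₁ = (δ₁+ε₂) − γ₁/2 − ε₂γ₄, c₂ = (δ₂+ε₁) − γ₂/2 − ε₁γ₃, c₃ = 1/(2γ₁) + ε₁/γ₃, c₄ = 1/(2γ₂) + ε₂/γ₄. -/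
open MeasureTheory

lemma young_aux {E : Type*} [NormedAddCommGroup E] [InnerProductSpace ℝ E]
    (γ : ℝ) (hγ : 0 < γ) (a b : E) :
    2 * (inner ℝ a b : ℝ) ≤ (1/γ) * ‖a‖^2 + γ * ‖b‖^2 := by
  rw [show (1/γ) * ‖a‖^2 + γ * ‖b‖^2 = (‖a‖^2 + γ^2 * ‖b‖^2)/γ by
        field_simp, le_div_iff₀ hγ]
  nlinarith [sq_nonneg (‖a‖ - γ * ‖b‖), real_inner_le_norm a b, hγ]

lemma sub_sq_aux {E : Type*} [NormedAddCommGroup E] [InnerProductSpace ℝ E]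
    (γ : ℝ) (hγ : 0 < γ) (a b : E) :
    (1 - γ) * ‖b‖^2 - (1/γ) * ‖a‖^2 ≤ ‖a - b‖^2 := by
  have h : ‖a - b‖^2 = ‖a‖^2 - 2 * (inner ℝ a b : ℝ) + ‖b‖^2 := by
    rw [norm_sub_sq_real]
  rw [show (1-γ) * ‖b‖^2 - (1/γ) * ‖a‖^2 = (γ*(1-γ)*‖b‖^2 - ‖a‖^2)/γ by
        field_simp, div_le_iff₀ hγ]
  nlinarith [sq_nonneg (‖a‖ - γ * ‖b‖), real_inner_le_norm a b, hγ]

lemma add_sq_aux {E : Type*} [NormedAddCommGroup E] [InnerProductSpace ℝ E]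
    (γ : ℝ) (hγ : 0 < γ) (a b : E) :
    (1 - γ) * ‖b‖^2 - (1/γ) * ‖a‖^2 ≤ ‖a + b‖^2 := by
  have := sub_sq_aux γ hγ a (-b)
  simpa [sub_neg_eq_add] using this

/-- Lemma 1 of the paper: bound on the outputs of the feedback interconnection of
two IOSP systems. -/
theorem iosp_interconnection_output_bound (n : ℕ)
    (u₁ u₂ y₁ y₂ r₁ r₂ : ℝ → EuclideanSpace ℝ (Fin n))
    (ε₁ ε₂ δ₁ δ₂ β₁ β₂ : ℝ)
    (hε₁ : 0 ≤ ε₁) (hε₂ : 0 ≤ ε₂) (hδ₁ : 0 ≤ δ₁) (hδ₂ : 0 ≤ δ₂)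
    (hβ₁ : 0 ≤ β₁) (hβ₂ : 0 ≤ β₂)
    (hu₁ : ∀ t, u₁ t = r₁ t - y₂ t)
    (hu₂ : ∀ t, u₂ t = r₂ t + y₁ t)
    (hint : ∀ (f g : ℝ → EuclideanSpace ℝ (Fin n)),
      (f = u₁ ∨ f = u₂ ∨ f = y₁ ∨ f = y₂ ∨ f = r₁ ∨ f = r₂) →
      (g = u₁ ∨ g = u₂ ∨ g = y₁ ∨ g = y₂ ∨ g = r₁ ∨ g = r₂) →
      ∀ T : ℝ, IntervalIntegrable (fun t => (inner ℝ (f t) (g t) : ℝ)) volume 0 T)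
    (hIOSP₁ : ∀ T : ℝ, 0 ≤ T →
      (∫ t in (0:ℝ)..T, (inner ℝ (u₁ t) (y₁ t) : ℝ)) ≥
        ε₁ * (∫ t in (0:ℝ)..T, ‖u₁ t‖ ^ 2) + δ₁ * (∫ t in (0:ℝ)..T, ‖y₁ t‖ ^ 2) - β₁)
    (hIOSP₂ : ∀ T : ℝ, 0 ≤ T →
      (∫ t in (0:ℝ)..T, (inner ℝ (u₂ t) (y₂ t) : ℝ)) ≥
        ε₂ * (∫ t in (0:ℝ)..T, ‖u₂ t‖ ^ 2) + δ₂ * (∫ t in (0:ℝ)..T, ‖y₂ t‖ ^ 2) - β₂)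
    (γ₁ γ₂ γ₃ γ₄ : ℝ) (hγ₁ : 0 < γ₁) (hγ₂ : 0 < γ₂) (hγ₃ : 0 < γ₃) (hγ₄ : 0 < γ₄) :
    ∃ βhat : ℝ, ∀ T : ℝ, 0 ≤ T →
      ((δ₁ + ε₂) - γ₁ / 2 - ε₂ * γ₄) * (∫ t in (0:ℝ)..T, ‖y₁ t‖ ^ 2) +
        ((δ₂ + ε₁) - γ₂ / 2 - ε₁ * γ₃) * (∫ t in (0:ℝ)..T, ‖y₂ t‖ ^ 2) ≤
      (1 / (2 * γ₁) + ε₁ / γ₃) * (∫ t in (0:ℝ)..T, ‖r₁ t‖ ^ 2) +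
        (1 / (2 * γ₂) + ε₂ / γ₄) * (∫ t in (0:ℝ)..T, ‖r₂ t‖ ^ 2) + βhat := by
  refine ⟨β₁ + β₂, fun T hT => ?_⟩
  have mu₁ : u₁ = u₁ ∨ u₁ = u₂ ∨ u₁ = y₁ ∨ u₁ = y₂ ∨ u₁ = r₁ ∨ u₁ = r₂ := Or.inl rfl
  have mu₂ : u₂ = u₁ ∨ u₂ = u₂ ∨ u₂ = y₁ ∨ u₂ = y₂ ∨ u₂ = r₁ ∨ u₂ = r₂ := Or.inr (Or.inl rfl)
  have my₁ : y₁ = u₁ ∨ y₁ = u₂ ∨ y₁ = y₁ ∨ y₁ = y₂ ∨ y₁ = r₁ ∨ y₁ = r₂ :=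
    Or.inr (Or.inr (Or.inl rfl))
  have my₂ : y₂ = u₁ ∨ y₂ = u₂ ∨ y₂ = y₁ ∨ y₂ = y₂ ∨ y₂ = r₁ ∨ y₂ = r₂ :=
    Or.inr (Or.inr (Or.inr (Or.inl rfl)))
  have mr₁ : r₁ = u₁ ∨ r₁ = u₂ ∨ r₁ = y₁ ∨ r₁ = y₂ ∨ r₁ = r₁ ∨ r₁ = r₂ :=
    Or.inr (Or.inr (Or.inr (Or.inr (Or.inl rfl))))
  have mr₂ : r₂ = u₁ ∨ r₂ = u₂ ∨ r₂ = y₁ ∨ r₂ = y₂ ∨ r₂ = r₁ ∨ r₂ = r₂ :=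
    Or.inr (Or.inr (Or.inr (Or.inr (Or.inr rfl))))
  -- integrability of squared norms
  have hsq : ∀ f, (f = u₁ ∨ f = u₂ ∨ f = y₁ ∨ f = y₂ ∨ f = r₁ ∨ f = r₂) →
      IntervalIntegrable (fun t => ‖f t‖ ^ 2) volume 0 T := by
    intro f hf
    have := hint f f hf hf T
    simpa only [real_inner_self_eq_norm_sq] using this
  -- sum of cross inner products equality
  have hpt : ∀ t, (inner ℝ (u₁ t) (y₁ t) : ℝ) + (inner ℝ (u₂ t) (y₂ t) : ℝ) =
      (inner ℝ (r₁ t) (y₁ t) : ℝ) + (inner ℝ (r₂ t) (y₂ t) : ℝ) := by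
    intro t
    rw [hu₁ t, hu₂ t, inner_sub_left, inner_add_left, real_inner_comm (y₂ t) (y₁ t)]
    ring
  have h1 : (∫ t in (0:ℝ)..T, (inner ℝ (u₁ t) (y₁ t) : ℝ)) +
      (∫ t in (0:ℝ)..T, (inner ℝ (u₂ t) (y₂ t) : ℝ)) =
      (∫ t in (0:ℝ)..T, (inner ℝ (r₁ t) (y₁ t) : ℝ)) +
      (∫ t in (0:ℝ)..T, (inner ℝ (r₂ t) (y₂ t) : ℝ)) := by
    rw [← intervalIntegral.integral_add (hint u₁ y₁ mu₁ my₁ T) (hint u₂ y₂ mu₂ my₂ T),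
        ← intervalIntegral.integral_add (hint r₁ y₁ mr₁ my₁ T) (hint r₂ y₂ mr₂ my₂ T)]
    exact intervalIntegral.integral_congr fun t _ => hpt t
  -- Young-type bounds on the cross terms
  have h2 : 2 * (∫ t in (0:ℝ)..T, (inner ℝ (r₁ t) (y₁ t) : ℝ)) ≤
      (1/γ₁) * (∫ t in (0:ℝ)..T, ‖r₁ t‖ ^ 2) + γ₁ * (∫ t in (0:ℝ)..T, ‖y₁ t‖ ^ 2) := by
    have hmono := intervalIntegral.integral_mono_on hT
      ((hint r₁ y₁ mr₁ my₁ T).const_mul 2)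
      (((hsq r₁ mr₁).const_mul (1/γ₁)).add ((hsq y₁ my₁).const_mul γ₁))
      (fun t _ => young_aux γ₁ hγ₁ (r₁ t) (y₁ t))
    rwa [intervalIntegral.integral_add ((hsq r₁ mr₁).const_mul (1/γ₁))
          ((hsq y₁ my₁).const_mul γ₁), intervalIntegral.integral_const_mul,
        intervalIntegral.integral_const_mul, intervalIntegral.integral_const_mul] at hmono
  have h3 : 2 * (∫ t in (0:ℝ)..T, (inner ℝ (r₂ t) (y₂ t) : ℝ)) ≤
      (1/γ₂) * (∫ t in (0:ℝ)..T, ‖r₂ t‖ ^ 2) + γ₂ * (∫ t in (0:ℝ)..T, ‖y₂ t‖ ^ 2) := by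
    have hmono := intervalIntegral.integral_mono_on hT
      ((hint r₂ y₂ mr₂ my₂ T).const_mul 2)
      (((hsq r₂ mr₂).const_mul (1/γ₂)).add ((hsq y₂ my₂).const_mul γ₂))
      (fun t _ => young_aux γ₂ hγ₂ (r₂ t) (y₂ t))
    rwa [intervalIntegral.integral_add ((hsq r₂ mr₂).const_mul (1/γ₂))
          ((hsq y₂ my₂).const_mul γ₂), intervalIntegral.integral_const_mul,
        intervalIntegral.integral_const_mul, intervalIntegral.integral_const_mul] at hmono
  -- lower bounds on the input energies
  have h4 : (1 - γ₃) * (∫ t in (0:ℝ)..T, ‖y₂ t‖ ^ 2) -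
      (1/γ₃) * (∫ t in (0:ℝ)..T, ‖r₁ t‖ ^ 2) ≤ (∫ t in (0:ℝ)..T, ‖u₁ t‖ ^ 2) := by
    have hmono := intervalIntegral.integral_mono_on hT
      (((hsq y₂ my₂).const_mul (1 - γ₃)).sub ((hsq r₁ mr₁).const_mul (1/γ₃)))
      (hsq u₁ mu₁)
      (fun t _ => by rw [hu₁ t]; exact sub_sq_aux γ₃ hγ₃ (r₁ t) (y₂ t))
    rwa [intervalIntegral.integral_sub ((hsq y₂ my₂).const_mul (1 - γ₃))
          ((hsq r₁ mr₁).const_mul (1/γ₃)), intervalIntegral.integral_const_mul,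
        intervalIntegral.integral_const_mul] at hmono
  have h5 : (1 - γ₄) * (∫ t in (0:ℝ)..T, ‖y₁ t‖ ^ 2) -
      (1/γ₄) * (∫ t in (0:ℝ)..T, ‖r₂ t‖ ^ 2) ≤ (∫ t in (0:ℝ)..T, ‖u₂ t‖ ^ 2) := by
    have hmono := intervalIntegral.integral_mono_on hT
      (((hsq y₁ my₁).const_mul (1 - γ₄)).sub ((hsq r₂ mr₂).const_mul (1/γ₄)))
      (hsq u₂ mu₂)
      (fun t _ => by rw [hu₂ t]; exact add_sq_aux γ₄ hγ₄ (r₂ t) (y₁ t))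
    rwa [intervalIntegral.integral_sub ((hsq y₁ my₁).const_mul (1 - γ₄))
          ((hsq r₂ mr₂).const_mul (1/γ₄)), intervalIntegral.integral_const_mul,
        intervalIntegral.integral_const_mul] at hmono
  have hi₁ := hIOSP₁ T hT
  have hi₂ := hIOSP₂ T hT
  set Y1 := (∫ t in (0:ℝ)..T, ‖y₁ t‖ ^ 2) with hY1
  set Y2 := (∫ t in (0:ℝ)..T, ‖y₂ t‖ ^ 2) with hY2
  set R1 := (∫ t in (0:ℝ)..T, ‖r₁ t‖ ^ 2) with hR1
  set R2 := (∫ t in (0:ℝ)..T, ‖r₂ t‖ ^ 2) with hR2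
  set U1 := (∫ t in (0:ℝ)..T, ‖u₁ t‖ ^ 2) with hU1
  set U2 := (∫ t in (0:ℝ)..T, ‖u₂ t‖ ^ 2) with hU2
  have hm4 : ε₁ * ((1 - γ₃) * Y2 - (1/γ₃) * R1) ≤ ε₁ * U1 :=
    mul_le_mul_of_nonneg_left h4 hε₁
  have hm5 : ε₂ * ((1 - γ₄) * Y1 - (1/γ₄) * R2) ≤ ε₂ * U2 :=
    mul_le_mul_of_nonneg_left h5 hε₂
  have e1 : 1 / (2 * γ₁) = (1/2) * (1/γ₁) := by
    rw [one_div_mul_one_div]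
  have e2 : 1 / (2 * γ₂) = (1/2) * (1/γ₂) := by
    rw [one_div_mul_one_div]
  have e3 : ε₁ / γ₃ = ε₁ * (1/γ₃) := by ring
  have e4 : ε₂ / γ₄ = ε₂ * (1/γ₄) := by ring
  rw [e1, e2, e3, e4]
  nlinarith [h1, h2, h3, hm4, hm5, hi₁, hi₂]
end

section
/- Under the same time-varying system setup, assume additionally there exist constants λ̄ ≥ 0 and λ_C > 0 with ½𝒳ᵀP̄(t)𝒳 ≤ (λ̄/2)‖𝒳‖² and ‖ℭ(t)𝒳‖² ≥ λ_C‖𝒳‖² for all 𝒳 and t. Then ⟨y₂|u₂⟩_T ≥ −𝒱(0) − (λ̄/(2λ_C))‖y₂‖²_{2,T} for all T ≥ 0, i.e. the system has an output passivity shortfall of at most λ̄/(2λ_C). -/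
open MeasureTheory Matrix

/-- Output passivity shortfall of the time-varying impedance system:
`⟨y₂|u₂⟩_T ≥ −𝒱(0) − (λ̄/(2λ_C))‖y₂‖²_{2,T}`. -/
theorem time_varying_passivity_shortfall (m p : ℕ)
    (𝔄 : ℝ → Matrix (Fin m) (Fin m) ℝ)
    (𝔅 : Matrix (Fin m) (Fin p) ℝ)
    (ℭ : ℝ → Matrix (Fin p) (Fin m) ℝ)
    (P P' : ℝ → Matrix (Fin m) (Fin m) ℝ)
    (hPsymm : ∀ t, (P t).IsSymm) (hPpos : ∀ t, (P t).PosDef)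
    (hP' : ∀ i j t, HasDerivAt (fun s => P s i j) (P' t i j) t)
    (hPB : ∀ t, P t * 𝔅 = (ℭ t)ᵀ)
    (lambar lamC : ℝ) (hlambar : 0 ≤ lambar) (hlamC : 0 < lamC)
    (hPbar : ∀ (t : ℝ) (x : Fin m → ℝ),
      x ⬝ᵥ ((P' t + P t * 𝔄 t + (𝔄 t)ᵀ * P t) *ᵥ x) ≤ lambar * (x ⬝ᵥ x))
    (hCbound : ∀ (t : ℝ) (x : Fin m → ℝ),
      lamC * (x ⬝ᵥ x) ≤ (ℭ t *ᵥ x) ⬝ᵥ (ℭ t *ᵥ x))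
    (𝒳 : ℝ → (Fin m → ℝ)) (u₂ : ℝ → (Fin p → ℝ))
    (hA : Continuous 𝔄) (hC : Continuous ℭ) (hP'cont : Continuous P')
    (hu : Continuous u₂)
    (hdyn : ∀ t, HasDerivAt 𝒳 ((𝔄 t *ᵥ 𝒳 t) + (𝔅 *ᵥ u₂ t)) t)
    (y₂ : ℝ → (Fin p → ℝ)) (hy₂ : ∀ t, y₂ t = ℭ t *ᵥ 𝒳 t)
    (𝒱 : ℝ → ℝ) (h𝒱 : ∀ t, 𝒱 t = (1 / 2 : ℝ) * (𝒳 t ⬝ᵥ (P t *ᵥ 𝒳 t))) :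
    ∀ T : ℝ, 0 ≤ T →
      (∫ t in (0:ℝ)..T, u₂ t ⬝ᵥ y₂ t) ≥
        -𝒱 0 - (lambar / (2 * lamC)) * (∫ t in (0:ℝ)..T, y₂ t ⬝ᵥ y₂ t) := by
  intro T hT
  set c : ℝ := lambar / (2 * lamC) with hc
  have hc0 : 0 ≤ c := div_nonneg hlambar (by linarith)
  -- continuity facts
  have hXcont : Continuous 𝒳 :=
    continuous_iff_continuousAt.2 fun t => (hdyn t).continuousAt
  have hycont : Continuous y₂ := by
    have : Continuous fun t => ℭ t *ᵥ 𝒳 t := hC.matrix_mulVec hXcont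
    simpa [funext hy₂] using this
  have hPcont : Continuous P := by
    apply continuous_matrix
    intro i j
    exact continuous_iff_continuousAt.2 fun t => (hP' i j t).continuousAt
  -- the derivative of the state, componentwise
  set x' : ℝ → (Fin m → ℝ) := fun t => (𝔄 t *ᵥ 𝒳 t) + (𝔅 *ᵥ u₂ t) with hx'
  have hXi : ∀ (i : Fin m) (t : ℝ), HasDerivAt (fun s => 𝒳 s i) (x' t i) t :=
    fun i t => (hasDerivAt_pi.1 (hdyn t)) i
  -- symmetry trick
  have hsymmdot : ∀ (t : ℝ) (a b : Fin m → ℝ),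
      a ⬝ᵥ (P t *ᵥ b) = b ⬝ᵥ (P t *ᵥ a) := by
    intro t a b
    rw [dotProduct_mulVec, ← mulVec_transpose, (hPsymm t).eq, dotProduct_comm]
  -- derivative of the quadratic form
  have key : ∀ (a : Fin m → ℝ) (M : Matrix (Fin m) (Fin m) ℝ) (b : Fin m → ℝ),
      a ⬝ᵥ (M *ᵥ b) = ∑ i, ∑ j, a i * (M i j * b j) := by
    intro a M b
    simp [dotProduct, mulVec, Finset.mul_sum]
  have hQ : ∀ t, HasDerivAt (fun s => 𝒳 s ⬝ᵥ (P s *ᵥ 𝒳 s))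
      (x' t ⬝ᵥ (P t *ᵥ 𝒳 t) + 𝒳 t ⬝ᵥ (P' t *ᵥ 𝒳 t) + 𝒳 t ⬝ᵥ (P t *ᵥ x' t)) t := by
    intro t
    have hsum : HasDerivAt (fun s => ∑ i, ∑ j, 𝒳 s i * (P s i j * 𝒳 s j))
        (∑ i, ∑ j, (x' t i * (P t i j * 𝒳 t j)
          + 𝒳 t i * (P' t i j * 𝒳 t j + P t i j * x' t j))) t := by
      apply HasDerivAt.fun_sum
      intro i _
      apply HasDerivAt.fun_sum
      intro j _
      exact (hXi i t).mul ((hP' i j t).mul (hXi j t))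
    have hfun : (fun s => ∑ i, ∑ j, 𝒳 s i * (P s i j * 𝒳 s j))
        = fun s => 𝒳 s ⬝ᵥ (P s *ᵥ 𝒳 s) := funext fun s => (key _ _ _).symm
    have hD : x' t ⬝ᵥ (P t *ᵥ 𝒳 t) + 𝒳 t ⬝ᵥ (P' t *ᵥ 𝒳 t) + 𝒳 t ⬝ᵥ (P t *ᵥ x' t)
        = ∑ i, ∑ j, (x' t i * (P t i j * 𝒳 t j)
          + 𝒳 t i * (P' t i j * 𝒳 t j + P t i j * x' t j)) := by
      simp only [key, ← Finset.sum_add_distrib]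
      exact Finset.sum_congr rfl fun i _ =>
        (Finset.sum_congr rfl fun j _ => by ring)
    rw [hD]
    rw [hfun] at hsum
    exact hsum
  -- algebraic identity for the derivative
  have hDalg : ∀ t,
      x' t ⬝ᵥ (P t *ᵥ 𝒳 t) + 𝒳 t ⬝ᵥ (P' t *ᵥ 𝒳 t) + 𝒳 t ⬝ᵥ (P t *ᵥ x' t)
        = 𝒳 t ⬝ᵥ ((P' t + P t * 𝔄 t + (𝔄 t)ᵀ * P t) *ᵥ 𝒳 t)
          + 2 * (u₂ t ⬝ᵥ y₂ t) := by
    intro t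
    have e1 : x' t ⬝ᵥ (P t *ᵥ 𝒳 t) = 𝒳 t ⬝ᵥ (P t *ᵥ x' t) := (hsymmdot t _ _).symm
    have e2 : 𝒳 t ⬝ᵥ (P t *ᵥ x' t)
        = 𝒳 t ⬝ᵥ ((P t * 𝔄 t) *ᵥ 𝒳 t) + u₂ t ⬝ᵥ y₂ t := by
      rw [hx']
      simp only [mulVec_add, dotProduct_add, mulVec_mulVec]
      congr 1
      rw [hPB t, dotProduct_mulVec, vecMul_transpose, dotProduct_comm, ← hy₂ t]
    have e3 : 𝒳 t ⬝ᵥ ((P t * 𝔄 t) *ᵥ 𝒳 t) = 𝒳 t ⬝ᵥ (((𝔄 t)ᵀ * P t) *ᵥ 𝒳 t) := by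
      rw [← mulVec_mulVec, ← mulVec_mulVec, hsymmdot t,
        dotProduct_mulVec (𝒳 t) (𝔄 t)ᵀ, vecMul_transpose]
    have e4 : 𝒳 t ⬝ᵥ ((P' t + P t * 𝔄 t + (𝔄 t)ᵀ * P t) *ᵥ 𝒳 t)
        = 𝒳 t ⬝ᵥ (P' t *ᵥ 𝒳 t) + 𝒳 t ⬝ᵥ ((P t * 𝔄 t) *ᵥ 𝒳 t)
          + 𝒳 t ⬝ᵥ (((𝔄 t)ᵀ * P t) *ᵥ 𝒳 t) := by
      simp [add_mulVec, dotProduct_add]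
    linarith [e1, e2, e3, e4]
  -- derivative of the storage function
  set W : ℝ → ℝ := fun t =>
    (1 / 2 : ℝ) * (𝒳 t ⬝ᵥ ((P' t + P t * 𝔄 t + (𝔄 t)ᵀ * P t) *ᵥ 𝒳 t))
      + u₂ t ⬝ᵥ y₂ t with hW
  have hVderiv : ∀ t, HasDerivAt 𝒱 (W t) t := by
    intro t
    have h1 : HasDerivAt (fun s => (1 / 2 : ℝ) * (𝒳 s ⬝ᵥ (P s *ᵥ 𝒳 s)))
        ((1 / 2 : ℝ) * (x' t ⬝ᵥ (P t *ᵥ 𝒳 t) + 𝒳 t ⬝ᵥ (P' t *ᵥ 𝒳 t)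
          + 𝒳 t ⬝ᵥ (P t *ᵥ x' t))) t := (hQ t).const_mul _
    have h2 : (fun s => (1 / 2 : ℝ) * (𝒳 s ⬝ᵥ (P s *ᵥ 𝒳 s))) = 𝒱 :=
      funext fun s => (h𝒱 s).symm
    rw [h2] at h1
    convert h1 using 1
    rw [hDalg t, hW]
    ring
  -- pointwise bound on W
  set f : ℝ → ℝ := fun t => u₂ t ⬝ᵥ y₂ t + c * (y₂ t ⬝ᵥ y₂ t) with hf
  have hWle : ∀ t, W t ≤ f t := by
    intro t
    have h1 := hPbar t (𝒳 t)
    have h2 := hCbound t (𝒳 t)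
    rw [← hy₂ t] at h2
    have h5 : lambar / 2 * (𝒳 t ⬝ᵥ 𝒳 t) ≤ c * (y₂ t ⬝ᵥ y₂ t) := by
      have h3 : c * (lamC * (𝒳 t ⬝ᵥ 𝒳 t)) ≤ c * (y₂ t ⬝ᵥ y₂ t) :=
        mul_le_mul_of_nonneg_left h2 hc0
      have h4 : lambar / 2 * (𝒳 t ⬝ᵥ 𝒳 t) = c * (lamC * (𝒳 t ⬝ᵥ 𝒳 t)) := by
        rw [hc]; field_simp
      linarith
    simp only [hW, hf]
    linarith [h1, h5]
  -- continuity of the integrand and of W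
  have hfcont : Continuous f := by
    apply Continuous.add
    · exact hu.dotProduct hycont
    · exact continuous_const.mul (hycont.dotProduct hycont)
  -- FTC / monotonicity argument
  set H : ℝ → ℝ := fun t => (∫ s in (0:ℝ)..t, f s) - 𝒱 t with hH
  have hHderiv : ∀ t, HasDerivAt H (f t - W t) t := by
    intro t
    exact (hfcont.integral_hasStrictDerivAt 0 t).hasDerivAt.sub (hVderiv t)
  have hHmono : Monotone H := by
    apply monotone_of_deriv_nonneg
    · exact fun t => (hHderiv t).differentiableAt
    · intro t
      rw [(hHderiv t).deriv]
      linarith [hWle t]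
  have hH0 : H 0 = -𝒱 0 := by simp [hH]
  have hHT : H 0 ≤ H T := hHmono hT
  have hVT : 0 ≤ 𝒱 T := by
    rw [h𝒱 T]
    rcases eq_or_ne (𝒳 T) 0 with h0 | h0
    · simp [h0]
    · have := (hPpos T).dotProduct_mulVec_pos h0
      have : (0:ℝ) < 𝒳 T ⬝ᵥ (P T *ᵥ 𝒳 T) := by simpa using this
      linarith
  have hint : (∫ s in (0:ℝ)..T, f s)
      = (∫ t in (0:ℝ)..T, u₂ t ⬝ᵥ y₂ t) + c * (∫ t in (0:ℝ)..T, y₂ t ⬝ᵥ y₂ t) := by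
    rw [hf]
    rw [intervalIntegral.integral_add ((hu.dotProduct hycont).intervalIntegrable 0 T)
      ((continuous_const.fun_mul (hycont.dotProduct hycont)).intervalIntegrable 0 T)]
    rw [intervalIntegral.integral_const_mul]
  have : -𝒱 0 ≤ (∫ s in (0:ℝ)..T, f s) - 𝒱 T := by
    rw [← hH0]; exact hHT
  rw [hint] at this
  linarith
end
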